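/- If 𝒮 = {S_1, …, S_n} is a collection of n subsets of a ground set Ω and R ⊆ Ω is pairwise separated by 𝒮, then |R| ≤ 2^{n−1}. -/
import Mathlib


/-- A set `R ⊆ Ω` is *pairwise separated* by the collection `𝒮 = {S 1, …, S n}` if for
every ordered pair of distinct elements `x, y ∈ R` there is an `i` with
`x ∈ S i` and `y ∉ S i`. -/
def PairwiseSeparated {Ω : Type*} {n : ℕ} (S : Fin n → Set Ω) (R : Set Ω) : Prop :=
  ∀ x ∈ R, ∀ y ∈ R, x ≠ y → ∃ i : Fin n, x ∈ S i ∧ y ∉ S i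

/-- **Lemma.** If `R` is pairwise separated by a collection of `n` subsets of `Ω`,
then `|R| ≤ 2 ^ (n - 1)`. -/
theorem stmt_2 (Ω : Type*) (n : ℕ) (S : Fin n → Set Ω) (R : Set Ω)
    (hR : PairwiseSeparated S R) :
    Cardinal.mk R ≤ ((2 : Cardinal) ^ (n - 1 : ℕ)) := by
  cases n with
  | zero =>
    have hsub : R.Subsingleton := by
      intro x hx y hy
      by_contra hne
      obtain ⟨i, _⟩ := hR x hx y hy hne
      exact i.elim0
    simpa using Cardinal.mk_le_one_iff_set_subsingleton.mpr hsub
  | succ m =>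
    have hf : Function.Injective
        (fun x : R => (fun i : Fin m => ULift.up.{u_1} ((x : Ω) ∈ S i.castSucc))) := by
      intro x y hxy
      apply Subtype.ext
      by_contra hne
      obtain ⟨i, hxi, hyi⟩ := hR x x.2 y y.2 hne
      obtain ⟨j, hyj, hxj⟩ := hR y y.2 x x.2 (Ne.symm hne)
      have hi : i = Fin.last m := by
        by_contra h
        obtain ⟨k, rfl⟩ : ∃ k : Fin m, k.castSucc = i :=
          ⟨i.castPred h, Fin.castSucc_castPred i h⟩
        have hk : ((x : Ω) ∈ S k.castSucc) = ((y : Ω) ∈ S k.castSucc) :=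
          congrArg ULift.down (congrFun hxy k)
        exact hyi (hk ▸ hxi)
      have hj : j = Fin.last m := by
        by_contra h
        obtain ⟨k, rfl⟩ : ∃ k : Fin m, k.castSucc = j :=
          ⟨j.castPred h, Fin.castSucc_castPred j h⟩
        have hk : ((x : Ω) ∈ S k.castSucc) = ((y : Ω) ∈ S k.castSucc) :=
          congrArg ULift.down (congrFun hxy k)
        exact hxj (hk.symm ▸ hyj)
      subst hi; subst hj
      exact hxj hxi
    calc Cardinal.mk R ≤ Cardinal.mk (Fin m → ULift.{u_1} Prop) :=
          Cardinal.mk_le_of_injective hf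
      _ = (2 : Cardinal) ^ (m : ℕ) := by
          rw [Cardinal.mk_fintype]
          simp
      _ = (2 : Cardinal) ^ (m + 1 - 1 : ℕ) := by simp
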